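/- Suppose T is a deductively closed consistent propositional theory and * satisfies the AGM postulates of closure, success, inclusion, and vacuity. Then the set of belief-revision explanations of β relative to T strictly contains the set of abductive explanations: every single-formula abductive explanation α of β (T ∪ {α} consistent and T ∪ {α} ⊨ β) is a belief-revision explanation (β ∈ T * α, T * α consistent); and if moreover T ⊨ ¬β with β satisfiable, there is a belief-revision explanation (namely β, by success and consistency) but no abductive explanation. -/
import Mathlib


inductive PropForm where
  | atom : Nat → PropForm
  | falsum : PropForm
  | neg : PropForm → PropForm
  | conj : PropForm → PropForm → PropForm
  | impl : PropForm → PropForm → PropForm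

def PropForm.eval (v : Nat → Bool) : PropForm → Bool
  | .atom n => v n
  | .falsum => false
  | .neg φ => !(φ.eval v)
  | .conj φ ψ => φ.eval v && ψ.eval v
  | .impl φ ψ => !(φ.eval v) || ψ.eval v

def Entails (T : Set PropForm) (φ : PropForm) : Prop :=
  ∀ v : Nat → Bool, (∀ ψ ∈ T, ψ.eval v = true) → φ.eval v = true

def Cn (T : Set PropForm) : Set PropForm := {φ | Entails T φ}

def Consistent (T : Set PropForm) : Prop := ¬ Entails T .falsum

lemma cons_model {T : Set PropForm} (h : Consistent T) :
    ∃ v : Nat → Bool, ∀ ψ ∈ T, ψ.eval v = true := by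
  by_contra hc
  push_neg at hc
  exact h (fun v hv => absurd hv (by
    obtain ⟨ψ, hψ, hne⟩ := hc v
    exact fun hall => hne (hall ψ hψ)))

theorem stmt16 (T : Set PropForm) (hclosed : Cn T = T) (hcons : Consistent T)
    (rev : Set PropForm → PropForm → Set PropForm)
    (closure : ∀ α : PropForm, rev T α = Cn (rev T α))
    (success : ∀ α : PropForm, α ∈ rev T α)
    (inclusion : ∀ α : PropForm, rev T α ⊆ Cn (T ∪ {α}))
    (vacuity : ∀ α : PropForm, Consistent (T ∪ {α}) → Cn (T ∪ {α}) ⊆ rev T α)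
    (consistencyPost : ∀ α : PropForm, (∃ v : Nat → Bool, α.eval v = true) →
      Consistent (rev T α))
    (β : PropForm) :
    (∀ α : PropForm, Consistent (T ∪ {α}) → Entails (T ∪ {α}) β →
      β ∈ rev T α ∧ Consistent (rev T α)) ∧
    (Entails T (.neg β) → (∃ v : Nat → Bool, β.eval v = true) →
      ((β ∈ rev T β ∧ Consistent (rev T β)) ∧
        ¬ ∃ α : PropForm, Consistent (T ∪ {α}) ∧ Entails (T ∪ {α}) β)) := by
  constructor
  · intro α hca hent
    refine ⟨vacuity α hca hent, ?_⟩
    intro hfal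
    obtain ⟨v, hv⟩ := cons_model hca
    have : PropForm.falsum.eval v = true :=
      hfal v (fun ψ hψ => inclusion α hψ v hv)
    simp [PropForm.eval] at this
  · intro hnb hsat
    refine ⟨⟨success β, consistencyPost β hsat⟩, ?_⟩
    rintro ⟨α, hca, hent⟩
    obtain ⟨v, hv⟩ := cons_model hca
    have h1 : β.eval v = true := hent v hv
    have h2 : (PropForm.neg β).eval v = true :=
      hnb v (fun ψ hψ => hv ψ (Set.mem_union_left _ hψ))
    simp [PropForm.eval, h1] at h2
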